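/- Let G be a finite group acting on a finite set X, let H ≤ G, and let κ : X → Y be an H-invariant surjection such that κ(x) = κ(x') implies x and x' lie in the same H-orbit. Then κ induces a bijection between the orbit set X/H and Y. In particular, for the action of the Young subgroup S_a on the set SPT_{λ,r} of set partition tableaux of shape λ (by relabeling entries), the coloring map κ_a induces a bijection ⨄_{a ∈ W_{r,k}} SPT_{λ,r}/S_a ≅ MPT_{λ,r,k}. -/

import Mathlib

open Finset
open scoped Classical

/-- The Young subgroup associated to a coloring map `c` : the subgroup of permutations
preserving `c`. -/
def colorStab {α β : Type*} (c : α → β) : Subgroup (Equiv.Perm α) where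
  carrier := {σ | ∀ x, c (σ x) = c x}
  one_mem' := fun _ => rfl
  mul_mem' := by
    intro σ τ hσ hτ x
    rw [Equiv.Perm.mul_apply, hσ, hτ]
  inv_mem' := by
    intro σ hσ x
    simpa using (hσ (σ⁻¹ x)).symm

/-- A set partition tableau of shape the Young diagram `Y` with content a set partition
of `[r]` : a filling of the cells of `Y` by disjoint subsets of `[r]` whose union is
`[r]`, where only cells in the first row may be empty. -/
def IsSPT (Y : YoungDiagram) (r : ℕ) (T : ℕ × ℕ → Finset (Fin r)) : Prop :=
  (∀ c, c ∉ Y.cells → T c = ∅) ∧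
  (∀ c ∈ Y.cells, 1 ≤ c.1 → T c ≠ ∅) ∧
  (∀ c ∈ Y.cells, ∀ c' ∈ Y.cells, c ≠ c' → Disjoint (T c) (T c')) ∧
  (Y.cells.biUnion T = univ)

/-- The set partition tableaux `SPT_{λ,r}`. -/
def SPT (Y : YoungDiagram) (r : ℕ) : Type :=
  {T : ℕ × ℕ → Finset (Fin r) // IsSPT Y r T}

/-- A multiset partition tableau of shape `Y` with content a multiset partition from
`[k]` with `r` total numbers. -/
def IsMPT (Y : YoungDiagram) (r k : ℕ) (M : ℕ × ℕ → Multiset (Fin k)) : Prop :=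
  (∀ c, c ∉ Y.cells → M c = 0) ∧
  (∀ c ∈ Y.cells, 1 ≤ c.1 → M c ≠ 0) ∧
  Multiset.card (Y.cells.sum M) = r

/-- Permutations act on set partition tableaux by relabeling the entries. -/
instance {Y : YoungDiagram} {r : ℕ} : MulAction (Equiv.Perm (Fin r)) (SPT Y r) where
  smul σ T := ⟨fun c => (T.val c).image σ, by
    obtain ⟨h1, h2, h3, h4⟩ := T.prop
    refine ⟨?_, ?_, ?_, ?_⟩
    · intro c hc
      show (T.val c).image ⇑σ = ∅
      rw [h1 c hc]; simp
    · intro c hc hr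
      show (T.val c).image ⇑σ ≠ ∅
      simpa [Finset.image_eq_empty] using h2 c hc hr
    · intro c hc c' hc' hne
      show Disjoint ((T.val c).image ⇑σ) ((T.val c').image ⇑σ)
      rw [Finset.disjoint_image σ.injective]
      exact h3 c hc c' hc' hne
    · show Y.cells.biUnion (fun c => (T.val c).image ⇑σ) = univ
      ext x
      simp only [Finset.mem_biUnion, Finset.mem_univ, iff_true]
      have hx : σ⁻¹ x ∈ Y.cells.biUnion T.val := by
        rw [h4]; exact Finset.mem_univ _
      obtain ⟨c, hc, hxc⟩ := Finset.mem_biUnion.mp hx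
      exact ⟨c, hc, Finset.mem_image.mpr ⟨σ⁻¹ x, hxc, by simp⟩⟩⟩
  one_smul T := by
    apply Subtype.ext
    funext c
    show (T.val c).image ⇑(1 : Equiv.Perm (Fin r)) = T.val c
    simp
  mul_smul σ τ T := by
    apply Subtype.ext
    funext c
    show (T.val c).image ⇑(σ * τ) = ((T.val c).image ⇑τ).image ⇑σ
    rw [Finset.image_image]
    rfl


/-- Auxiliary: a submultiset of an image is an image of a submultiset. -/
lemma aux_exists_sub_map {α β : Type*} (f : α → β) :
    ∀ (m : Multiset β) (u : Multiset α), m ≤ u.map f → ∃ t ≤ u, t.map f = m := by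
  intro m
  induction m using Multiset.induction_on with
  | empty => intro u _; exact ⟨0, Multiset.zero_le u, rfl⟩
  | cons a m ih =>
    intro u h
    have ha : a ∈ u.map f := Multiset.mem_of_le h (Multiset.mem_cons_self a m)
    obtain ⟨x, hx, rfl⟩ := Multiset.mem_map.mp ha
    have hu : u.map f = f x ::ₘ (u.erase x).map f := by
      rw [← Multiset.map_cons, Multiset.cons_erase hx]
    rw [hu, Multiset.cons_le_cons_iff] at h
    obtain ⟨t, htu, htm⟩ := ih (u.erase x) h
    refine ⟨x ::ₘ t, ?_, by rw [Multiset.map_cons, htm]⟩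
    calc x ::ₘ t ≤ x ::ₘ u.erase x := Multiset.cons_le_cons x htu
    _ = u := Multiset.cons_erase hx

/-- Auxiliary: split a multiset into pieces with prescribed images. -/
lemma aux_exists_partition {ι α β : Type*} (f : α → β) (s : Finset ι) :
    ∀ (M : ι → Multiset β) (u : Multiset α), s.sum M = u.map f →
      ∃ T : ι → Multiset α, (∀ i ∈ s, (T i).map f = M i) ∧ s.sum T = u ∧ ∀ i ∉ s, T i = 0 := by
  classical
  induction s using Finset.induction_on with
  | empty =>
    intro M u h
    have hu : u = 0 := Multiset.map_eq_zero.mp (by rw [← h, Finset.sum_empty])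
    exact ⟨fun _ => 0, by simp, by simp [hu], fun _ _ => rfl⟩
  | insert a s ha ih =>
    intro M u h
    rw [Finset.sum_insert ha] at h
    have hle : M a ≤ u.map f := h ▸ Multiset.le_add_right _ _
    obtain ⟨t, htu, htm⟩ := aux_exists_sub_map f (M a) u hle
    have hrest : s.sum M = (u - t).map f := by
      have hu : u = t + (u - t) := (add_tsub_cancel_of_le htu).symm
      have h2 : u.map f = M a + (u - t).map f := by
        conv_lhs => rw [hu]
        rw [Multiset.map_add, htm]
      exact add_left_cancel (h.trans h2)
    obtain ⟨T, hT1, hT2, hT3⟩ := ih M (u - t) hrest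
    refine ⟨Function.update T a t, ?_, ?_, ?_⟩
    · intro i hi
      rcases Finset.mem_insert.mp hi with rfl | hi
      · rw [Function.update_self]; exact htm
      · rw [Function.update_of_ne (fun hia => ha (by rw [← hia]; exact hi))]; exact hT1 i hi
    · have hs : s.sum (Function.update T a t) = s.sum T :=
        Finset.sum_congr rfl
          (fun i hi => Function.update_of_ne (fun hia => ha (by rw [← hia]; exact hi)) _ _)
      rw [Finset.sum_insert ha, Function.update_self, hs, hT2, add_tsub_cancel_of_le htu]
    · intro i hi
      have hia : i ≠ a := fun hia => hi (hia ▸ Finset.mem_insert_self a s)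
      rw [Function.update_of_ne hia]
      exact hT3 i (fun h' => hi (Finset.mem_insert_of_mem h'))

/-- Auxiliary: functions with equal fiber sizes differ by a permutation. -/
lemma aux_exists_perm {α γ : Type*} [Fintype α] (u v : α → γ)
    (h : ∀ c : γ, (univ.filter (fun x => u x = c)).card = (univ.filter (fun x => v x = c)).card) :
    ∃ σ : Equiv.Perm α, ∀ x, u (σ x) = v x := by
  classical
  have e : ∀ c : γ, {x // v x = c} ≃ {x // u x = c} := fun c =>
    Fintype.equivOfCardEq (by rw [Fintype.card_subtype, Fintype.card_subtype, h])
  refine ⟨(Equiv.sigmaFiberEquiv v).symm.trans ((Equiv.sigmaCongrRight e).trans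
    (Equiv.sigmaFiberEquiv u)), fun x => ?_⟩
  exact (e (v x) ⟨x, rfl⟩).prop

/-- Auxiliary: a monotone function `Fin r → Fin k` is determined by its content. -/
lemma aux_mono_eq {r k : ℕ} {f g : Fin r → Fin k} (hf : Monotone f) (hg : Monotone g)
    (h : (univ.val.map f : Multiset (Fin k)) = univ.val.map g) : f = g := by
  rw [Fin.univ_val_map, Fin.univ_val_map, Multiset.coe_eq_coe] at h
  exact List.ofFn_injective (List.Perm.eq_of_sortedLE
    (List.sortedLE_ofFn_iff.mpr hf) (List.sortedLE_ofFn_iff.mpr hg) h)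

/-- Auxiliary: the blocks of a set partition tableau sum to `[r]`. -/
lemma aux_spt_sum {Y : YoungDiagram} {r : ℕ} (T : SPT Y r) :
    Y.cells.sum (fun c => (T.val c).val) = (univ : Finset (Fin r)).val := by
  classical
  obtain ⟨h1, h2, h3, h4⟩ := T.prop
  refine Multiset.ext.mpr fun x => ?_
  rw [Multiset.count_sum']
  have hx : x ∈ Y.cells.biUnion T.val := by rw [h4]; exact Finset.mem_univ x
  obtain ⟨c₀, hc₀, hxc₀⟩ := Finset.mem_biUnion.mp hx
  rw [Finset.sum_eq_single_of_mem c₀ hc₀ (fun c hc hne => Multiset.count_eq_zero_of_notMem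
      (fun hxc => (Finset.disjoint_left.mp (h3 c hc c₀ hc₀ hne) hxc) hxc₀)),
    Multiset.count_eq_one_of_mem (T.val c₀).nodup hxc₀,
    Multiset.count_eq_one_of_mem (univ : Finset (Fin r)).nodup (Finset.mem_univ x)]

lemma aux_cell_eu {Y : YoungDiagram} {r : ℕ} (T : SPT Y r) (x : Fin r) :
    ∃! c, c ∈ Y.cells ∧ x ∈ T.val c := by
  obtain ⟨h1, h2, h3, h4⟩ := T.prop
  have hx : x ∈ Y.cells.biUnion T.val := by rw [h4]; exact Finset.mem_univ x
  obtain ⟨c₀, hc₀, hxc₀⟩ := Finset.mem_biUnion.mp hx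
  refine ⟨c₀, ⟨hc₀, hxc₀⟩, ?_⟩
  rintro c ⟨hc, hxc⟩
  by_contra hne
  exact (Finset.disjoint_left.mp (h3 c hc c₀ hc₀ hne) hxc) hxc₀

/-- Auxiliary: the cell of the tableau containing a given number. -/
noncomputable def cellOf {Y : YoungDiagram} {r : ℕ} (T : SPT Y r) (x : Fin r) : ℕ × ℕ :=
  Finset.choose (fun c => x ∈ T.val c) Y.cells (aux_cell_eu T x)

lemma cellOf_mem {Y : YoungDiagram} {r : ℕ} (T : SPT Y r) (x : Fin r) :
    cellOf T x ∈ Y.cells :=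
  Finset.choose_mem (fun c => x ∈ T.val c) Y.cells (aux_cell_eu T x)

lemma mem_cellOf {Y : YoungDiagram} {r : ℕ} (T : SPT Y r) (x : Fin r) :
    x ∈ T.val (cellOf T x) :=
  Finset.choose_property (fun c => x ∈ T.val c) Y.cells (aux_cell_eu T x)

lemma cellOf_eq_iff {Y : YoungDiagram} {r : ℕ} (T : SPT Y r) (x : Fin r) {c : ℕ × ℕ}
    (hc : c ∈ Y.cells) : cellOf T x = c ↔ x ∈ T.val c := by
  constructor
  · rintro rfl; exact mem_cellOf T x
  · intro hxc
    by_contra hne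
    exact (Finset.disjoint_left.mp
      (T.prop.2.2.1 _ (cellOf_mem T x) c hc hne) (mem_cellOf T x)) hxc

/-- (General part) Let `G` be a finite group acting on a finite set
`X`, `H ≤ G`, and `κ : X → Z` an `H`-invariant surjection such that `κ(x) = κ(x')`
implies `x, x'` lie in the same `H`-orbit.  Then `κ` induces a bijection `X/H ≅ Z`.
(Particular part)  For the action of the Young subgroups `S_a` on set partition tableaux
of shape `λ` by relabeling entries, the coloring maps `κ_a` induce a bijection
`⨄_{a ∈ W_{r,k}} SPT_{λ,r}/S_a ≅ MPT_{λ,r,k}` (weak compositions `a` being encoded by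
their monotone coloring maps `f : Fin r → Fin k`). -/
theorem stmt19
    {G : Type*} [Group G] [Finite G] {X : Type*} [MulAction G X] [Finite X]
    (H : Subgroup G) {Z : Type*} (κ : X → Z)
    (hsurj : Function.Surjective κ)
    (hinv : ∀ (h : H) (x : X), κ (h • x) = κ x)
    (hfib : ∀ x x', κ x = κ x' → x' ∈ MulAction.orbit H x)
    (Y : YoungDiagram) (r k : ℕ) :
    (∃ e : Quotient (MulAction.orbitRel H X) ≃ Z,
        ∀ x : X, e (Quotient.mk (MulAction.orbitRel H X) x) = κ x) ∧
    (∃ e : (Σ f : {f : Fin r → Fin k // Monotone f},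
              Quotient (MulAction.orbitRel ↥(colorStab f.val) (SPT Y r))) ≃
            {M : ℕ × ℕ → Multiset (Fin k) // IsMPT Y r k M},
        ∀ (f : {f : Fin r → Fin k // Monotone f}) (T : SPT Y r),
          (e ⟨f, Quotient.mk (MulAction.orbitRel ↥(colorStab f.val) (SPT Y r)) T⟩).val =
            fun c => (T.val c).val.map f.val) := by
    classical
  constructor
  · -- general part
    have wd : ∀ a b : X, MulAction.orbitRel H X a b → κ a = κ b := by
      intro a b hab
      obtain ⟨h, rfl⟩ := MulAction.orbitRel_apply.mp hab
      exact hinv h b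
    have hbij : Function.Bijective (Quotient.lift κ wd) := by
      constructor
      · intro p q
        induction p using Quotient.ind with | _ x => ?_
        induction q using Quotient.ind with | _ y => ?_
        intro hxy
        exact Quotient.sound (MulAction.orbitRel_apply.mpr (hfib y x hxy.symm))
      · intro z
        obtain ⟨x, rfl⟩ := hsurj z
        exact ⟨Quotient.mk _ x, rfl⟩
    exact ⟨Equiv.ofBijective _ hbij, fun x => rfl⟩
  · -- particular part
    have key : ∀ (f : Fin r → Fin k) (T : SPT Y r),
        IsMPT Y r k (fun c => ((T.val c).val.map f)) := by
      intro f T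
      refine ⟨fun c hc => ?_, fun c hc hr h0 => ?_, ?_⟩
      · show Multiset.map f (T.val c).val = 0
        rw [T.prop.1 c hc]; rfl
      · exact T.prop.2.1 c hc hr (Finset.val_eq_zero.mp (Multiset.map_eq_zero.mp h0))
      · have hms : Y.cells.sum (fun c => (T.val c).val.map f)
            = Multiset.map f (Y.cells.sum fun c => (T.val c).val) :=
          (map_sum (Multiset.mapAddMonoidHom f) _ _).symm
        rw [hms, aux_spt_sum, Multiset.card_map, ← Finset.card_def, Finset.card_univ,
          Fintype.card_fin]
    have wd2 : ∀ (f : {f : Fin r → Fin k // Monotone f}) (T S : SPT Y r),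
        MulAction.orbitRel ↥(colorStab f.val) (SPT Y r) T S →
        (fun c => (T.val c).val.map f.val) = (fun c => (S.val c).val.map f.val) := by
      intro f T S hTS
      obtain ⟨σ, rfl⟩ := MulAction.mem_orbit_iff.mp (MulAction.orbitRel_apply.mp hTS)
      funext c
      show ((S.val c).image ⇑(σ : Equiv.Perm (Fin r))).val.map f.val = (S.val c).val.map f.val
      rw [Finset.image_val_of_injOn ((σ : Equiv.Perm (Fin r)).injective.injOn),
        Multiset.map_map]
      congr 1
      funext x
      exact σ.prop x
    let Φ : (Σ f : {f : Fin r → Fin k // Monotone f},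
        Quotient (MulAction.orbitRel ↥(colorStab f.val) (SPT Y r))) →
        {M : ℕ × ℕ → Multiset (Fin k) // IsMPT Y r k M} :=
      fun p => Quotient.lift
        (fun T : SPT Y r => (⟨fun c => (T.val c).val.map p.1.val, key p.1.val T⟩ :
          {M : ℕ × ℕ → Multiset (Fin k) // IsMPT Y r k M}))
        (fun T S hTS => Subtype.ext (wd2 p.1 T S hTS)) p.2
    have hsum : ∀ (W : SPT Y r) (u : Fin r → Fin k),
        Multiset.map u (univ : Finset (Fin r)).val
          = Y.cells.sum (fun c => (W.val c).val.map u) := by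
      intro W u
      rw [← aux_spt_sum W]
      exact map_sum (Multiset.mapAddMonoidHom u) _ _
    have hinj : Function.Injective Φ := by
      rintro ⟨f, qT⟩ ⟨g, qS⟩ h
      obtain ⟨T, rfl⟩ := Quotient.exists_rep qT
      obtain ⟨S, rfl⟩ := Quotient.exists_rep qS
      have hval : (fun c => (T.val c).val.map f.val) = (fun c => (S.val c).val.map g.val) :=
        congrArg Subtype.val h
      have hfg : f = g := by
        refine Subtype.ext (aux_mono_eq f.prop g.prop ?_)
        rw [hsum T f.val, hsum S g.val]
        exact Finset.sum_congr rfl (fun c _ => congrFun hval c)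
      subst hfg
      have hcount : ∀ (W : SPT Y r) (p : (ℕ × ℕ) × Fin k),
          (univ.filter (fun x => ((cellOf W x, f.val x) : (ℕ × ℕ) × Fin k) = p)).card
            = if p.1 ∈ Y.cells then Multiset.count p.2 ((W.val p.1).val.map f.val) else 0 := by
        intro W p
        obtain ⟨c, j⟩ := p
        by_cases hc : c ∈ Y.cells
        · simp only [hc, if_true]
          have hset : univ.filter (fun x => ((cellOf W x, f.val x) : (ℕ × ℕ) × Fin k) = (c, j))
              = (W.val c).filter (fun a => j = f.val a) := by
            ext x
            simp only [Finset.mem_filter, Finset.mem_univ, true_and, Prod.mk.injEq]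
            constructor
            · rintro ⟨h1, h2⟩
              exact ⟨(cellOf_eq_iff W x hc).mp h1, h2.symm⟩
            · rintro ⟨h1, h2⟩
              exact ⟨(cellOf_eq_iff W x hc).mpr h1, h2.symm⟩
          rw [hset, Multiset.count_map, Finset.card_def, Finset.filter_val]
        · simp only [hc, if_false]
          rw [Finset.card_eq_zero, Finset.filter_eq_empty_iff]
          intro x _ heq
          have h1 : cellOf W x = c := (Prod.ext_iff.mp heq).1
          exact hc (h1 ▸ cellOf_mem W x)
      obtain ⟨σ, hσ⟩ := aux_exists_perm (fun x => ((cellOf S x, f.val x) : (ℕ × ℕ) × Fin k))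
          (fun x => ((cellOf T x, f.val x) : (ℕ × ℕ) × Fin k)) (by
        intro p
        have hST : (if p.1 ∈ Y.cells then Multiset.count p.2
              ((S.val p.1).val.map f.val) else 0)
            = (if p.1 ∈ Y.cells then Multiset.count p.2
              ((T.val p.1).val.map f.val) else 0) := by
          by_cases hc : p.1 ∈ Y.cells
          · simp only [hc, if_true, congrFun hval p.1]
          · simp [hc]
        convert (hcount S p).trans (hST.trans (hcount T p).symm) using 3)
      have hσcol : σ ∈ colorStab f.val := fun x => congrArg Prod.snd (hσ x)
      have hσT : (⟨σ, hσcol⟩ : ↥(colorStab f.val)) • T = S := by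
        apply Subtype.ext
        funext c
        show (T.val c).image ⇑σ = S.val c
        by_cases hc : c ∈ Y.cells
        · ext x
          simp only [Finset.mem_image]
          constructor
          · rintro ⟨y, hy, rfl⟩
            have h1 : cellOf T y = c := (cellOf_eq_iff T y hc).mpr hy
            have h2 : cellOf S (σ y) = cellOf T y := congrArg Prod.fst (hσ y)
            exact (cellOf_eq_iff S (σ y) hc).mp (by rw [h2, h1])
          · intro hx
            refine ⟨σ⁻¹ x, ?_, by simp⟩
            have h2 : cellOf S (σ (σ⁻¹ x)) = cellOf T (σ⁻¹ x) := congrArg Prod.fst (hσ _)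
            rw [← Equiv.Perm.mul_apply, mul_inv_cancel, Equiv.Perm.one_apply] at h2
            have h1 : cellOf S x = c := (cellOf_eq_iff S x hc).mpr hx
            exact (cellOf_eq_iff T _ hc).mp (by rw [← h2, h1])
        · rw [T.prop.1 c hc, S.prop.1 c hc]
          simp
      refine congrArg (Sigma.mk f) (Quotient.sound (MulAction.orbitRel_apply.mpr
        (MulAction.mem_orbit_iff.mpr ⟨(⟨σ, hσcol⟩ : ↥(colorStab f.val))⁻¹, ?_⟩)))
      rw [← hσT, inv_smul_smul]
    have hsurj2 : Function.Surjective Φ := by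
      rintro ⟨M, hM⟩
      have hcard : Multiset.card (Y.cells.sum M) = r := hM.2.2
      set l : List (Fin k) := (Y.cells.sum M).sort (· ≤ ·) with hl
      have hlen : l.length = r := by rw [hl, Multiset.length_sort, hcard]
      set f : Fin r → Fin k := fun i => l.get (Fin.cast hlen.symm i) with hf
      have hofn : List.ofFn f = l := by
        refine List.ext_get (by simp [hlen]) ?_
        intro n h1 h2
        rw [List.get_ofFn]
        rfl
      have hmono : Monotone f :=
        List.sortedLE_ofFn_iff.mp (by rw [hofn]; exact (Multiset.pairwise_sort _ _).sortedLE)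
      have hmapf : Multiset.map f (univ : Finset (Fin r)).val = Y.cells.sum M := by
        rw [Fin.univ_val_map, hofn, hl, Multiset.sort_eq]
      obtain ⟨Tm, hT1, hT2, hT3⟩ := aux_exists_partition f Y.cells M univ.val hmapf.symm
      have hnodup : ∀ c, (Tm c).Nodup := by
        intro c
        by_cases hc : c ∈ Y.cells
        · refine Multiset.nodup_of_le ?_ (univ : Finset (Fin r)).nodup
          rw [← hT2]
          exact Finset.single_le_sum (fun i _ => Multiset.zero_le _) hc
        · rw [hT3 c hc]; exact Multiset.nodup_zero
      set Tf : ℕ × ℕ → Finset (Fin r) := fun c => ⟨Tm c, hnodup c⟩ with hTfdef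
      have hTf : IsSPT Y r Tf := by
        refine ⟨?_, ?_, ?_, ?_⟩
        · intro c hc
          exact Finset.val_eq_zero.mp (hT3 c hc)
        · intro c hc hr h0
          apply hM.2.1 c hc hr
          have h0' : Tm c = 0 := Finset.val_eq_zero.mpr h0
          rw [← hT1 c hc, h0']
          rfl
        · intro c hc c' hc' hne
          have hle : Tm c + Tm c' ≤ (univ : Finset (Fin r)).val := by
            rw [← hT2]
            calc Tm c + Tm c'
                ≤ (Y.cells.erase c').sum Tm + Tm c' := by
                  have : Tm c ≤ (Y.cells.erase c').sum Tm :=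
                    Finset.single_le_sum (fun i _ => Multiset.zero_le _)
                      (Finset.mem_erase.mpr ⟨hne, hc⟩)
                  exact add_le_add_left this _
              _ = Y.cells.sum Tm := Finset.sum_erase_add _ _ hc'
          have hdisj := (Multiset.nodup_add.mp
            (Multiset.nodup_of_le hle (univ : Finset (Fin r)).nodup)).2.2
          rw [Finset.disjoint_left]
          intro a ha ha'
          exact Multiset.disjoint_left.mp hdisj ha ha'
        · ext x
          simp only [Finset.mem_biUnion, Finset.mem_univ, iff_true]
          have hx : x ∈ Y.cells.sum Tm := by
            rw [hT2]; exact Finset.mem_univ x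
          obtain ⟨c, hc, hxc⟩ := Multiset.mem_sum.mp hx
          exact ⟨c, hc, hxc⟩
      refine ⟨⟨⟨f, hmono⟩, Quotient.mk _ (⟨Tf, hTf⟩ : SPT Y r)⟩, ?_⟩
      apply Subtype.ext
      funext c
      show (Tf c).val.map f = M c
      by_cases hc : c ∈ Y.cells
      · exact hT1 c hc
      · rw [hM.1 c hc]
        show Multiset.map f (Tm c) = 0
        rw [hT3 c hc]
        rfl
    exact ⟨Equiv.ofBijective Φ ⟨hinj, hsurj2⟩, fun f T => rfl⟩
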